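/- Assume hypothesis (H1) and the family setup below, and for each ε ∈ (0,1/2) set v_ε(x) := η_ε(x)·e^{−Q(x)} for x ∈ [ε,1/ε]. Then: (i) there exists A > 0 such that v_ε(x)² ≤ A for all ε ∈ (0,1/2) and all x ∈ [ε,1/ε]; and (ii) for every δ > 0 there exist 0 < m < M < ∞ such that for all ε ∈ (0,1/2), ∫_{[ε,1/ε] ∖ [m,M]} v_ε(x)² dx ≤ δ (the family of measures (v_ε(x)² dx) is tight). -/

import Mathlib

open MeasureTheory intervalIntegral Filter

section StmtAux
open Set

private lemma stmt4_aux (q q' Q W : ℝ → ℝ)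
    (hq : ∀ x ∈ Set.Ioi (0:ℝ), HasDerivAt q (q' x) x)
    (hq'cont : ContinuousOn q' (Set.Ioi 0))
    (hQ : ∀ x, Q x = ∫ y in (1:ℝ)..x, q y)
    (hWdef : ∀ x ∈ Set.Ioi (0:ℝ), W x = q x ^ 2 - q' x)
    (C : ℝ) (hC : 0 < C) (hWlb : ∀ x ∈ Set.Ioi (0:ℝ), -C ≤ W x)
    (Λ : ℝ) (lam : ℝ → ℝ) (η η' η'' : ℝ → ℝ → ℝ)
    (ε : ℝ) (hε : ε ∈ Set.Ioo (0:ℝ) (1/2))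
    (hlam : lam ε ≤ Λ)
    (hη' : ∀ x ∈ Set.Icc ε (1/ε), HasDerivAt (η ε) (η' ε x) x)
    (hη'' : ∀ x ∈ Set.Icc ε (1/ε), HasDerivAt (η' ε) (η'' ε x) x)
    (hbd : η ε ε = 0 ∧ η ε (1/ε) = 0)
    (hode : ∀ x ∈ Set.Icc ε (1/ε),
      (1/2) * η'' ε x - q x * η' ε x = -(lam ε) * η ε x)
    (hnorm : (∫ x in ε..(1/ε), (η ε x) ^ 2 * Real.exp (-2 * Q x)) = 1) :
    (∀ x ∈ Set.Icc ε (1/ε), (η ε x * Real.exp (-(Q x)))^2 ≤ 1 + (2*Λ + C)) ∧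
    (∀ a ∈ Set.Icc ε (1/ε), ∀ K : ℝ, 0 < K → (∀ x ∈ Set.Icc a (1/ε), K ≤ W x) →
      (∫ x in a..(1/ε), (η ε x * Real.exp (-(Q x)))^2) ≤ (2*Λ + C)/K) ∧
    (∀ a ∈ Set.Icc ε (1/ε), ∀ b ∈ Set.Icc ε (1/ε),
      IntervalIntegrable (fun x => (η ε x * Real.exp (-(Q x)))^2) volume a b) := by
  obtain ⟨hε0, hεh⟩ := hε
  have hεle : ε ≤ 1/ε := by
    have : (2:ℝ) ≤ 1/ε := by rw [le_div_iff₀ hε0]; linarith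
    linarith
  have hIccsub : Set.Icc ε (1/ε) ⊆ Set.Ioi 0 := fun x hx => lt_of_lt_of_le hε0 hx.1
  have huIcc : Set.uIcc ε (1/ε) = Set.Icc ε (1/ε) := Set.uIcc_of_le hεle
  -- derivative of Q
  have hqc : ContinuousOn q (Set.Ioi 0) := fun y hy => (hq y hy).continuousAt.continuousWithinAt
  have hQd : ∀ x ∈ Set.Ioi (0:ℝ), HasDerivAt Q (q x) x := by
    intro x hx
    have hQe : Q = fun x => ∫ y in (1:ℝ)..x, q y := funext hQ
    rw [hQe]
    have hsub : Set.uIcc (1:ℝ) x ⊆ Set.Ioi 0 := by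
      intro y hy
      simp only [Set.mem_Ioi]
      rcases le_total 1 x with h | h
      · simp [Set.uIcc_of_le h] at hy; linarith [hy.1]
      · simp [Set.uIcc_of_ge h] at hy; linarith [hy.1, hx.out]
    exact intervalIntegral.integral_hasDerivAt_right ((hqc.mono hsub).intervalIntegrable)
      (hqc.stronglyMeasurableAtFilter isOpen_Ioi x hx) (hq x hx).continuousAt
  -- derivative of v = η e^{-Q}
  have hvderiv : ∀ x ∈ Set.Icc ε (1/ε),
      HasDerivAt (fun y => η ε y * Real.exp (-(Q y)))
        ((η' ε x - q x * η ε x) * Real.exp (-(Q x))) x := by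
    intro x hx
    have hE : HasDerivAt (fun y => Real.exp (-(Q y))) (Real.exp (-(Q x)) * (-(q x))) x :=
      ((hQd x (hIccsub hx)).neg).exp
    have h : HasDerivAt (fun y => η ε y * Real.exp (-(Q y))) _ x := (hη' x hx).mul hE
    convert h using 1; ring
  have hvdderiv : ∀ x ∈ Set.Icc ε (1/ε),
      HasDerivAt (fun y => (η' ε y - q y * η ε y) * Real.exp (-(Q y)))
        ((W x - 2 * lam ε) * (η ε x * Real.exp (-(Q x)))) x := by
    intro x hx
    have hE : HasDerivAt (fun y => Real.exp (-(Q y))) (Real.exp (-(Q x)) * (-(q x))) x :=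
      ((hQd x (hIccsub hx)).neg).exp
    have hg : HasDerivAt (fun y => η' ε y - q y * η ε y)
        (η'' ε x - (q' x * η ε x + q x * η' ε x)) x :=
      (hη'' x hx).sub ((hq x (hIccsub hx)).mul (hη' x hx))
    have h : HasDerivAt (fun y => (η' ε y - q y * η ε y) * Real.exp (-(Q y))) _ x := hg.mul hE
    convert h using 1
    have hW := hWdef x (hIccsub hx)
    have ho := hode x hx
    have hη2 : η'' ε x = 2 * (q x * η' ε x - lam ε * η ε x) := by linarith
    rw [hW, hη2]; ring
  have hvcont : ContinuousOn (fun y => η ε y * Real.exp (-(Q y))) (Set.Icc ε (1/ε)) :=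
    fun x hx => ((hvderiv x hx).continuousAt).continuousWithinAt
  have hvdcont : ContinuousOn (fun y => (η' ε y - q y * η ε y) * Real.exp (-(Q y)))
      (Set.Icc ε (1/ε)) := fun x hx => ((hvdderiv x hx).continuousAt).continuousWithinAt
  have hWcont : ContinuousOn W (Set.Icc ε (1/ε)) := by
    apply ContinuousOn.congr (f := fun x => q x ^ 2 - q' x)
    · exact (((hqc.mono hIccsub).pow 2).sub (hq'cont.mono hIccsub))
    · intro x hx; exact hWdef x (hIccsub hx)
  -- integrability facts
  have hsubint : ∀ a ∈ Set.Icc ε (1/ε), ∀ b ∈ Set.Icc ε (1/ε),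
      Set.uIcc a b ⊆ Set.Icc ε (1/ε) := fun a ha b hb => Set.uIcc_subset_Icc ha hb
  have hintv2 : ∀ a ∈ Set.Icc ε (1/ε), ∀ b ∈ Set.Icc ε (1/ε),
      IntervalIntegrable (fun x => (η ε x * Real.exp (-(Q x)))^2) volume a b := by
    intro a ha b hb
    exact ((hvcont.mono (hsubint a ha b hb)).pow 2).intervalIntegrable
  have hintvd2 : ∀ a ∈ Set.Icc ε (1/ε), ∀ b ∈ Set.Icc ε (1/ε),
      IntervalIntegrable (fun x => ((η' ε x - q x * η ε x) * Real.exp (-(Q x)))^2) volume a b := by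
    intro a ha b hb
    exact ((hvdcont.mono (hsubint a ha b hb)).pow 2).intervalIntegrable
  have hintWv2 : ∀ a ∈ Set.Icc ε (1/ε), ∀ b ∈ Set.Icc ε (1/ε),
      IntervalIntegrable (fun x => W x * (η ε x * Real.exp (-(Q x)))^2) volume a b := by
    intro a ha b hb
    exact ((hWcont.mono (hsubint a ha b hb)).mul
      ((hvcont.mono (hsubint a ha b hb)).pow 2)).intervalIntegrable
  -- normalization in terms of v
  have hnorm' : (∫ x in ε..(1/ε), (η ε x * Real.exp (-(Q x)))^2) = 1 := by
    have hcongr : (∫ x in ε..(1/ε), (η ε x * Real.exp (-(Q x)))^2)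
        = ∫ x in ε..(1/ε), (η ε x)^2 * Real.exp (-2 * Q x) := by
      apply intervalIntegral.integral_congr
      intro x _
      show (η ε x * Real.exp (-(Q x)))^2 = (η ε x)^2 * Real.exp (-2 * Q x)
      rw [mul_pow, sq (Real.exp (-(Q x))), ← Real.exp_add]
      ring_nf
    rw [hcongr]; exact hnorm
  -- integration by parts / energy identity
  have hparts := intervalIntegral.integral_mul_deriv_eq_deriv_mul
    (a := ε) (b := (1/ε))
    (u := fun y => η ε y * Real.exp (-(Q y)))
    (v := fun y => (η' ε y - q y * η ε y) * Real.exp (-(Q y)))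
    (u' := fun y => (η' ε y - q y * η ε y) * Real.exp (-(Q y)))
    (v' := fun y => (W y - 2 * lam ε) * (η ε y * Real.exp (-(Q y))))
    (by rw [huIcc]; exact hvderiv) (by rw [huIcc]; exact hvdderiv)
    (hvdcont.mono (by rw [huIcc])).intervalIntegrable
    (((hWcont.sub continuousOn_const).mul hvcont).mono (by rw [huIcc])).intervalIntegrable
  try simp only [] at hparts
  rw [hbd.1, hbd.2] at hparts
  simp only [zero_mul, mul_zero, sub_zero, zero_sub] at hparts
  -- hparts : ∫ v x * ((W x - 2λ) * v x) = - ∫ vd x * vd x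
  have henergy : (∫ x in ε..(1/ε), W x * (η ε x * Real.exp (-(Q x)))^2)
      - 2 * lam ε
      = - ∫ x in ε..(1/ε), ((η' ε x - q x * η ε x) * Real.exp (-(Q x)))^2 := by
    have h1 : (∫ x in ε..(1/ε), (η ε x * Real.exp (-(Q x))) *
        ((W x - 2 * lam ε) * (η ε x * Real.exp (-(Q x)))))
        = (∫ x in ε..(1/ε), (W x * (η ε x * Real.exp (-(Q x)))^2
            - (2 * lam ε) * (η ε x * Real.exp (-(Q x)))^2)) := by
      apply intervalIntegral.integral_congr; intro x _; ring
    have h2 : (∫ x in ε..(1/ε), ((η' ε x - q x * η ε x) * Real.exp (-(Q x))) *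
        ((η' ε x - q x * η ε x) * Real.exp (-(Q x))))
        = ∫ x in ε..(1/ε), ((η' ε x - q x * η ε x) * Real.exp (-(Q x)))^2 := by
      apply intervalIntegral.integral_congr; intro x _; ring_nf
    rw [h1, h2] at hparts
    rw [intervalIntegral.integral_sub (hintWv2 _ (Set.left_mem_Icc.2 hεle) _ (Set.right_mem_Icc.2 hεle))
        ((hintv2 _ (Set.left_mem_Icc.2 hεle) _ (Set.right_mem_Icc.2 hεle)).const_mul _),
      intervalIntegral.integral_const_mul, hnorm', mul_one] at hparts
    exact hparts
  -- lower bound for ∫ W v²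
  have hWlow : ∀ a ∈ Set.Icc ε (1/ε), ∀ b ∈ Set.Icc ε (1/ε), a ≤ b →
      - C * (∫ x in a..b, (η ε x * Real.exp (-(Q x)))^2)
        ≤ ∫ x in a..b, W x * (η ε x * Real.exp (-(Q x)))^2 := by
    intro a ha b hb hab
    rw [← intervalIntegral.integral_const_mul]
    apply intervalIntegral.integral_mono_on hab ((hintv2 a ha b hb).const_mul _) (hintWv2 a ha b hb)
    intro x hx
    have hxm : x ∈ Set.Icc ε (1/ε) := ⟨le_trans ha.1 hx.1, le_trans hx.2 hb.2⟩
    exact mul_le_mul_of_nonneg_right (hWlb x (hIccsub hxm)) (sq_nonneg _)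
  -- ∫ v² over subinterval [a,b] ⊆ [ε,1/ε] is between 0 and 1
  have hsq_nonneg : ∀ a b : ℝ, a ≤ b →
      0 ≤ ∫ x in a..b, (η ε x * Real.exp (-(Q x)))^2 := by
    intro a b hab
    apply intervalIntegral.integral_nonneg hab
    intro x _; exact sq_nonneg _
  have hsplit : ∀ a ∈ Set.Icc ε (1/ε),
      (∫ x in ε..a, (η ε x * Real.exp (-(Q x)))^2)
      + (∫ x in a..(1/ε), (η ε x * Real.exp (-(Q x)))^2) = 1 := by
    intro a ha
    rw [intervalIntegral.integral_add_adjacent_intervals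
      (hintv2 _ (Set.left_mem_Icc.2 hεle) _ ha) (hintv2 _ ha _ (Set.right_mem_Icc.2 hεle)), hnorm']
  have hle_one : ∀ a ∈ Set.Icc ε (1/ε),
      (∫ x in ε..a, (η ε x * Real.exp (-(Q x)))^2) ≤ 1 := by
    intro a ha
    have := hsplit a ha
    have h2 := hsq_nonneg a (1/ε) ha.2
    linarith
  -- total ∫ W v² ≤ 2Λ and ∫ vd² ≤ 2Λ + C
  have hWtot_le : (∫ x in ε..(1/ε), W x * (η ε x * Real.exp (-(Q x)))^2) ≤ 2*Λ := by
    have h0 := hsq_nonneg ε (1/ε) hεle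
    have h1 : (0:ℝ) ≤ ∫ x in ε..(1/ε), ((η' ε x - q x * η ε x) * Real.exp (-(Q x)))^2 := by
      apply intervalIntegral.integral_nonneg hεle; intro x _; exact sq_nonneg _
    linarith
  have hvd2_le : (∫ x in ε..(1/ε), ((η' ε x - q x * η ε x) * Real.exp (-(Q x)))^2)
      ≤ 2*Λ + C := by
    have h := hWlow ε (Set.left_mem_Icc.2 hεle) (1/ε) (Set.right_mem_Icc.2 hεle) hεle
    rw [hnorm'] at h
    linarith
  refine ⟨?_, ?_, fun a ha b hb => hintv2 a ha b hb⟩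
  · -- pointwise bound
    intro x hx
    have hxIcc : Set.uIcc ε x ⊆ Set.Icc ε (1/ε) :=
      hsubint ε (Set.left_mem_Icc.2 hεle) x hx
    have hsq : ∀ t ∈ Set.uIcc ε x,
        HasDerivAt (fun y => (η ε y * Real.exp (-(Q y)))^2)
          (2 * ((η ε t * Real.exp (-(Q t))) * ((η' ε t - q t * η ε t) * Real.exp (-(Q t))))) t := by
      intro t ht
      have h : HasDerivAt (fun y => (η ε y * Real.exp (-(Q y)))^2) _ t := (hvderiv t (hxIcc ht)).pow 2
      convert h using 1; push_cast; ring
    have hintder : IntervalIntegrable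
        (fun t => 2 * ((η ε t * Real.exp (-(Q t))) * ((η' ε t - q t * η ε t) * Real.exp (-(Q t)))))
        volume ε x := by
      exact (continuousOn_const.mul ((hvcont.mono hxIcc).mul (hvdcont.mono hxIcc))).intervalIntegrable
    have hftc := intervalIntegral.integral_eq_sub_of_hasDerivAt hsq hintder
    rw [hbd.1] at hftc
    simp only [zero_mul, ne_eq, OfNat.ofNat_ne_zero, not_false_eq_true, zero_pow, sub_zero] at hftc
    -- v x ^2 = ∫_ε^x 2 v vd
    have hmono : (∫ t in ε..x, 2 * ((η ε t * Real.exp (-(Q t))) *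
        ((η' ε t - q t * η ε t) * Real.exp (-(Q t)))))
        ≤ ∫ t in ε..x, ((η ε t * Real.exp (-(Q t)))^2
            + ((η' ε t - q t * η ε t) * Real.exp (-(Q t)))^2) := by
      apply intervalIntegral.integral_mono_on hx.1 hintder
        ((hintv2 _ (Set.left_mem_Icc.2 hεle) _ hx).add (hintvd2 _ (Set.left_mem_Icc.2 hεle) _ hx))
      intro t _
      have := two_mul_le_add_sq (η ε t * Real.exp (-(Q t)))
        ((η' ε t - q t * η ε t) * Real.exp (-(Q t)))
      linarith
    have hsum : (∫ t in ε..x, ((η ε t * Real.exp (-(Q t)))^2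
          + ((η' ε t - q t * η ε t) * Real.exp (-(Q t)))^2))
        = (∫ t in ε..x, (η ε t * Real.exp (-(Q t)))^2)
          + ∫ t in ε..x, ((η' ε t - q t * η ε t) * Real.exp (-(Q t)))^2 :=
      intervalIntegral.integral_add (hintv2 _ (Set.left_mem_Icc.2 hεle) _ hx)
        (hintvd2 _ (Set.left_mem_Icc.2 hεle) _ hx)
    have hvd2x_le : (∫ t in ε..x, ((η' ε t - q t * η ε t) * Real.exp (-(Q t)))^2)
        ≤ 2*Λ + C := by
      have hsplitvd : (∫ t in ε..x, ((η' ε t - q t * η ε t) * Real.exp (-(Q t)))^2)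
          + (∫ t in x..(1/ε), ((η' ε t - q t * η ε t) * Real.exp (-(Q t)))^2)
          = ∫ t in ε..(1/ε), ((η' ε t - q t * η ε t) * Real.exp (-(Q t)))^2 :=
        intervalIntegral.integral_add_adjacent_intervals
          (hintvd2 _ (Set.left_mem_Icc.2 hεle) _ hx) (hintvd2 _ hx _ (Set.right_mem_Icc.2 hεle))
      have h2 : (0:ℝ) ≤ ∫ t in x..(1/ε), ((η' ε t - q t * η ε t) * Real.exp (-(Q t)))^2 := by
        apply intervalIntegral.integral_nonneg hx.2; intro t _; exact sq_nonneg _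
      linarith
    have hv2x_le := hle_one x hx
    rw [hftc] at hmono
    rw [hsum] at hmono
    linarith
  · -- tail bound
    intro a ha K hK hWK
    have haR : (1/ε) ∈ Set.Icc ε (1/ε) := Set.right_mem_Icc.2 hεle
    have haL : ε ∈ Set.Icc ε (1/ε) := Set.left_mem_Icc.2 hεle
    -- ∫_a^{1/ε} W v² ≤ 2Λ + C
    have hsplitW : (∫ x in ε..a, W x * (η ε x * Real.exp (-(Q x)))^2)
        + (∫ x in a..(1/ε), W x * (η ε x * Real.exp (-(Q x)))^2)
        = ∫ x in ε..(1/ε), W x * (η ε x * Real.exp (-(Q x)))^2 :=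
      intervalIntegral.integral_add_adjacent_intervals (hintWv2 _ haL _ ha) (hintWv2 _ ha _ haR)
    have hlow : - C ≤ ∫ x in ε..a, W x * (η ε x * Real.exp (-(Q x)))^2 := by
      have h1 := hWlow ε haL a ha ha.1
      have h2 := hle_one a ha
      have h3 := hsq_nonneg ε a ha.1
      nlinarith
    have htailW : (∫ x in a..(1/ε), W x * (η ε x * Real.exp (-(Q x)))^2) ≤ 2*Λ + C := by
      linarith
    -- K ∫ v² ≤ ∫ W v² on [a, 1/ε]
    have hKle : K * (∫ x in a..(1/ε), (η ε x * Real.exp (-(Q x)))^2)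
        ≤ ∫ x in a..(1/ε), W x * (η ε x * Real.exp (-(Q x)))^2 := by
      rw [← intervalIntegral.integral_const_mul]
      apply intervalIntegral.integral_mono_on ha.2 ((hintv2 _ ha _ haR).const_mul _)
        (hintWv2 _ ha _ haR)
      intro x hx
      exact mul_le_mul_of_nonneg_right (hWK x hx) (sq_nonneg _)
    rw [le_div_iff₀ hK]
    calc (∫ x in a..(1/ε), (η ε x * Real.exp (-(Q x)))^2) * K
        = K * (∫ x in a..(1/ε), (η ε x * Real.exp (-(Q x)))^2) := by ring
      _ ≤ ∫ x in a..(1/ε), W x * (η ε x * Real.exp (-(Q x)))^2 := hKle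
      _ ≤ 2*Λ + C := htailW


private lemma stmt4_tight (q q' Q W : ℝ → ℝ)
    (hWtop : Tendsto W atTop atTop)
    (C Λ δ A : ℝ) (hC : 0 < C) (hδ : 0 < δ) (hA : A = 1 + |2*Λ + C|)
    (η : ℝ → ℝ → ℝ)
    (key : ∀ ε ∈ Set.Ioo (0:ℝ) (1/2),
      (∀ x ∈ Set.Icc ε (1/ε), (η ε x * Real.exp (-(Q x)))^2 ≤ 1 + (2*Λ + C)) ∧
      (∀ a ∈ Set.Icc ε (1/ε), ∀ K : ℝ, 0 < K → (∀ x ∈ Set.Icc a (1/ε), K ≤ W x) →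
        (∫ x in a..(1/ε), (η ε x * Real.exp (-(Q x)))^2) ≤ (2*Λ + C)/K) ∧
      (∀ a ∈ Set.Icc ε (1/ε), ∀ b ∈ Set.Icc ε (1/ε),
        IntervalIntegrable (fun x => (η ε x * Real.exp (-(Q x)))^2) volume a b)) :
    ∃ m M : ℝ, 0 < m ∧ m < M ∧ ∀ ε ∈ Set.Ioo (0:ℝ) (1/2),
      (∫ x in Set.Icc ε (1/ε) \ Set.Icc m M, (η ε x * Real.exp (-(Q x))) ^ 2) ≤ δ := by
  have hA0 : 0 < A := by rw [hA]; positivity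
  set K := (|2*Λ + C| + 1) * 2 / δ with hKdef
  have hK0 : 0 < K := by positivity
  obtain ⟨M0, hM0⟩ := Filter.eventually_atTop.mp (hWtop.eventually_ge_atTop K)
  set m := min (δ/(2*A)) 1 with hmdef
  have hm0 : 0 < m := lt_min (by positivity) one_pos
  set M := max M0 (m+1) with hMdef
  refine ⟨m, M, hm0, lt_of_lt_of_le (lt_add_one m) (le_max_right _ _), ?_⟩
  intro ε hε
  obtain ⟨hε0, hεh⟩ := hε
  have hεle : ε ≤ 1/ε := by
    have : (2:ℝ) ≤ 1/ε := by rw [le_div_iff₀ hε0]; linarith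
    linarith
  obtain ⟨hb1, hb2, hb3⟩ := key ε ⟨hε0, hεh⟩
  have hbA : ∀ x ∈ Set.Icc ε (1/ε), (η ε x * Real.exp (-(Q x)))^2 ≤ A := by
    intro x hx
    refine le_trans (hb1 x hx) ?_
    have := le_abs_self (2*Λ + C); rw [hA]; linarith
  have hIntOn : IntegrableOn (fun x => (η ε x * Real.exp (-(Q x)))^2)
      (Set.Icc ε (1/ε)) volume := by
    rw [← intervalIntegrable_iff_integrableOn_Icc_of_le hεle]
    exact hb3 ε (Set.left_mem_Icc.2 hεle) (1/ε) (Set.right_mem_Icc.2 hεle)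
  set S1 := Set.Icc ε (1/ε) ∩ Set.Iic m with hS1def
  set S2 := Set.Icc ε (1/ε) ∩ Set.Ici M with hS2def
  have hS1sub : S1 ⊆ Set.Icc ε (1/ε) := Set.inter_subset_left
  have hS2sub : S2 ⊆ Set.Icc ε (1/ε) := Set.inter_subset_left
  have hS1m : MeasurableSet S1 := measurableSet_Icc.inter measurableSet_Iic
  have hS2m : MeasurableSet S2 := measurableSet_Icc.inter measurableSet_Ici
  have hSsub : Set.Icc ε (1/ε) \ Set.Icc m M ⊆ S1 ∪ S2 := by
    intro x hx
    obtain ⟨hx1, hx2⟩ := hx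
    by_cases h : x ≤ m
    · exact Or.inl ⟨hx1, h⟩
    · refine Or.inr ⟨hx1, ?_⟩
      by_contra h2
      simp only [Set.mem_Ici, not_le] at h2
      exact hx2 ⟨le_of_not_ge h, le_of_lt h2⟩
  have hdisj : Disjoint S1 S2 := by
    apply Set.disjoint_left.2
    rintro x ⟨_, hx1⟩ ⟨_, hx2⟩
    have : m + 1 ≤ m := le_trans (le_trans (le_max_right M0 (m+1)) hx2) hx1
    linarith
  have hnn : ∀ x, 0 ≤ (η ε x * Real.exp (-(Q x)))^2 := fun x => sq_nonneg _
  have hstep1 : (∫ x in Set.Icc ε (1/ε) \ Set.Icc m M, (η ε x * Real.exp (-(Q x))) ^ 2)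
      ≤ ∫ x in S1 ∪ S2, (η ε x * Real.exp (-(Q x))) ^ 2 := by
    apply setIntegral_mono_set (hIntOn.mono_set (Set.union_subset hS1sub hS2sub))
      (ae_of_all _ hnn) (HasSubset.Subset.eventuallyLE hSsub)
  have hstep2 : (∫ x in S1 ∪ S2, (η ε x * Real.exp (-(Q x))) ^ 2)
      = (∫ x in S1, (η ε x * Real.exp (-(Q x))) ^ 2)
        + ∫ x in S2, (η ε x * Real.exp (-(Q x))) ^ 2 :=
    setIntegral_union hdisj hS2m (hIntOn.mono_set hS1sub) (hIntOn.mono_set hS2sub)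
  -- bound on S1
  have hvolS1 : volume S1 < ⊤ :=
    lt_of_le_of_lt (measure_mono hS1sub)
      (by rw [Real.volume_Icc]; exact ENNReal.ofReal_lt_top)
  have hS1bound : (∫ x in S1, (η ε x * Real.exp (-(Q x))) ^ 2) ≤ δ/2 := by
    have h1 : ‖∫ x in S1, (η ε x * Real.exp (-(Q x))) ^ 2‖
        ≤ A * (volume S1).toReal := by
      apply norm_setIntegral_le_of_norm_le_const hvolS1 ?_
      intro x hx
      rw [Real.norm_eq_abs, abs_of_nonneg (hnn x)]
      exact hbA x (hS1sub hx)
    have h2 : (volume S1).toReal ≤ m := by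
      have hsub : S1 ⊆ Set.Icc ε m := fun x hx => ⟨hx.1.1, hx.2⟩
      have := measure_mono (μ := volume) hsub
      rw [Real.volume_Icc] at this
      calc (volume S1).toReal ≤ (ENNReal.ofReal (m - ε)).toReal :=
            ENNReal.toReal_mono ENNReal.ofReal_ne_top this
        _ = max (m - ε) 0 := ENNReal.toReal_ofReal'
        _ ≤ m := max_le (by linarith) (le_of_lt hm0)
    have h3 : (∫ x in S1, (η ε x * Real.exp (-(Q x))) ^ 2)
        ≤ ‖∫ x in S1, (η ε x * Real.exp (-(Q x))) ^ 2‖ := le_abs_self _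
    have h4 : A * (volume S1).toReal ≤ A * m :=
      mul_le_mul_of_nonneg_left h2 (le_of_lt hA0)
    have h5 : A * m ≤ A * (δ/(2*A)) :=
      mul_le_mul_of_nonneg_left (min_le_left _ _) (le_of_lt hA0)
    have h6 : A * (δ/(2*A)) = δ/2 := by field_simp; try ring
    linarith
  -- bound on S2
  have hS2bound : (∫ x in S2, (η ε x * Real.exp (-(Q x))) ^ 2) ≤ δ/2 := by
    set a := max ε M with hadef
    have hS2sub' : S2 ⊆ Set.Icc a (1/ε) := by
      rintro x ⟨hx1, hx2⟩
      exact ⟨max_le hx1.1 hx2, hx1.2⟩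
    by_cases hcase : a ≤ 1/ε
    · have haIcc : a ∈ Set.Icc ε (1/ε) := ⟨le_max_left _ _, hcase⟩
      have hIntOn2 : IntegrableOn (fun x => (η ε x * Real.exp (-(Q x)))^2)
          (Set.Icc a (1/ε)) volume :=
        hIntOn.mono_set (Set.Icc_subset_Icc (le_max_left _ _) le_rfl)
      have hst1 : (∫ x in S2, (η ε x * Real.exp (-(Q x))) ^ 2)
          ≤ ∫ x in Set.Icc a (1/ε), (η ε x * Real.exp (-(Q x))) ^ 2 :=
        setIntegral_mono_set hIntOn2 (ae_of_all _ hnn)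
          (HasSubset.Subset.eventuallyLE hS2sub')
      have hst2 : (∫ x in Set.Icc a (1/ε), (η ε x * Real.exp (-(Q x))) ^ 2)
          = ∫ x in a..(1/ε), (η ε x * Real.exp (-(Q x))) ^ 2 := by
        rw [intervalIntegral.integral_of_le hcase, integral_Icc_eq_integral_Ioc]
      have hWK : ∀ x ∈ Set.Icc a (1/ε), K ≤ W x := by
        intro x hx
        exact hM0 x (le_trans (le_trans (le_max_left M0 (m+1)) (le_max_right ε M)) hx.1)
      have hst3 := hb2 a haIcc K hK0 hWK
      have hst4 : (2*Λ + C)/K ≤ δ/2 := by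
        rw [hKdef]
        rw [div_le_div_iff₀ (by positivity) (by norm_num : (0:ℝ) < 2)]
        have h9 : δ * ((|2*Λ + C| + 1) * 2 / δ) = (|2*Λ + C| + 1) * 2 := by
          field_simp
        rw [h9]
        have h7 := le_abs_self (2*Λ + C)
        linarith
      linarith [hst1, hst2 ▸ hst3]
    · have hempty : S2 = ∅ := by
        apply Set.eq_empty_iff_forall_notMem.2
        intro x hx
        have := hS2sub' hx
        exact hcase (le_trans this.1 this.2)
      rw [hempty]
      simp only [MeasureTheory.setIntegral_empty]
      linarith
  linarith [hstep1, hstep2, hS1bound, hS2bound]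

end StmtAux

theorem stmt_4 (q q' Q W : ℝ → ℝ)
    (hq : ∀ x ∈ Set.Ioi (0:ℝ), HasDerivAt q (q' x) x)
    (hq'cont : ContinuousOn q' (Set.Ioi 0))
    (hQ : ∀ x, Q x = ∫ y in (1:ℝ)..x, q y)
    (hWdef : ∀ x ∈ Set.Ioi (0:ℝ), W x = q x ^ 2 - q' x)
    -- Hypothesis (H1)
    (C : ℝ) (hC : 0 < C) (hWlb : ∀ x ∈ Set.Ioi (0:ℝ), -C ≤ W x)
    (hWtop : Tendsto W atTop atTop)
    -- Family setup
    (Λ : ℝ) (lam : ℝ → ℝ) (η η' η'' : ℝ → ℝ → ℝ)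
    (hlam : ∀ ε ∈ Set.Ioo (0:ℝ) (1/2), lam ε ≤ Λ)
    (hη' : ∀ ε ∈ Set.Ioo (0:ℝ) (1/2), ∀ x ∈ Set.Icc ε (1/ε),
      HasDerivAt (η ε) (η' ε x) x)
    (hη'' : ∀ ε ∈ Set.Ioo (0:ℝ) (1/2), ∀ x ∈ Set.Icc ε (1/ε),
      HasDerivAt (η' ε) (η'' ε x) x)
    (hη''cont : ∀ ε ∈ Set.Ioo (0:ℝ) (1/2), ContinuousOn (η'' ε) (Set.Icc ε (1/ε)))
    (hpos : ∀ ε ∈ Set.Ioo (0:ℝ) (1/2), ∀ x ∈ Set.Ioo ε (1/ε), 0 < η ε x)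
    (hbd : ∀ ε ∈ Set.Ioo (0:ℝ) (1/2), η ε ε = 0 ∧ η ε (1/ε) = 0)
    (hode : ∀ ε ∈ Set.Ioo (0:ℝ) (1/2), ∀ x ∈ Set.Icc ε (1/ε),
      (1/2) * η'' ε x - q x * η' ε x = -(lam ε) * η ε x)
    (hnorm : ∀ ε ∈ Set.Ioo (0:ℝ) (1/2),
      (∫ x in ε..(1/ε), (η ε x) ^ 2 * Real.exp (-2 * Q x)) = 1) :
    -- (i) uniform boundedness of v_ε² with v_ε(x) = η_ε(x)·e^{−Q(x)}
    (∃ A > 0, ∀ ε ∈ Set.Ioo (0:ℝ) (1/2), ∀ x ∈ Set.Icc ε (1/ε),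
      (η ε x * Real.exp (-(Q x))) ^ 2 ≤ A) ∧
    -- (ii) tightness of the family (v_ε(x)² dx)
    (∀ δ > 0, ∃ m M : ℝ, 0 < m ∧ m < M ∧ ∀ ε ∈ Set.Ioo (0:ℝ) (1/2),
      (∫ x in Set.Icc ε (1/ε) \ Set.Icc m M, (η ε x * Real.exp (-(Q x))) ^ 2) ≤ δ) := by
  
  have key : ∀ ε ∈ Set.Ioo (0:ℝ) (1/2),
      (∀ x ∈ Set.Icc ε (1/ε), (η ε x * Real.exp (-(Q x)))^2 ≤ 1 + (2*Λ + C)) ∧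
      (∀ a ∈ Set.Icc ε (1/ε), ∀ K : ℝ, 0 < K → (∀ x ∈ Set.Icc a (1/ε), K ≤ W x) →
        (∫ x in a..(1/ε), (η ε x * Real.exp (-(Q x)))^2) ≤ (2*Λ + C)/K) ∧
      (∀ a ∈ Set.Icc ε (1/ε), ∀ b ∈ Set.Icc ε (1/ε),
        IntervalIntegrable (fun x => (η ε x * Real.exp (-(Q x)))^2) volume a b) := by
    intro ε hε
    exact stmt4_aux q q' Q W hq hq'cont hQ hWdef C hC hWlb Λ lam η η' η'' ε hε (hlam ε hε)
      (hη' ε hε) (hη'' ε hε) (hbd ε hε) (hode ε hε) (hnorm ε hε)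
  constructor
  · refine ⟨1 + |2*Λ + C|, by positivity, ?_⟩
    intro ε hε x hx
    refine le_trans ((key ε hε).1 x hx) ?_
    have := le_abs_self (2*Λ + C); linarith
  · intro δ hδ
    exact stmt4_tight q q' Q W hWtop C Λ δ _ hC hδ rfl η key
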